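/- arXiv:2509.07830 — 11 statements merged into one kernel-verified Lean document; each statement's English description precedes it below -/
import Mathlib

section
/- Let R be a commutative ring with unity such that for each a, b ∈ R, Ann(a) + Ann(b) = Ann(ab). Then R is reduced, i.e., R has no nonzero nilpotent elements. -/
/-- If `Ann(a) + Ann(b) = Ann(ab)` for all `a, b`, then `R` is reduced. -/
theorem stmt1 {R : Type*} [CommRing R]
    (h : ∀ a b c : R, c * (a * b) = 0 ↔ ∃ x y : R, x * a = 0 ∧ y * b = 0 ∧ c = x + y) :
    IsReduced R := by
  refine (isReduced_iff_pow_one_lt 2 one_lt_two).2 fun a ha => ?_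
  obtain ⟨x, y, hx, hy, hxy⟩ := (h a a 1).1 (by rw [one_mul, ← sq, ha])
  calc a = (x + y) * a := by rw [← hxy, one_mul]
    _ = 0 := by rw [add_mul, hx, hy, add_zero]
end

section
/- Let {R_α : α ∈ S} be a family of commutative rings and R = ∏_{α∈S} R_α the product ring. Then R is a PW-ring if and only if each R_α is a PW-ring. -/
/-- `R` is a PW-ring: for all `a b` with `aR ⊓ bR = 0`, `Ann(a) + Ann(b)` contains a
regular element (non-zerodivisor). -/
def IsPWRing (R : Type*) [CommRing R] : Prop :=
  ∀ a b : R, Ideal.span {a} ⊓ Ideal.span {b} = ⊥ →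
    ∃ x y : R, x * a = 0 ∧ y * b = 0 ∧ (∀ z : R, (x + y) * z = 0 → z = 0)

theorem Ideal.span_singleton_inf_span_singleton_eq_bot_iff {R : Type*} [CommSemiring R]
    {a b : R} : span {a} ⊓ span {b} = ⊥ ↔ ∀ z, a ∣ z → b ∣ z → z = 0 := by
  simp only [Submodule.eq_bot_iff, mem_inf, mem_span_singleton, and_imp]

theorem isPWRing_iff {R : Type*} [CommRing R] :
    IsPWRing R ↔ ∀ a b : R, Ideal.span {a} ⊓ Ideal.span {b} = ⊥ →
      ∃ x y : R, x * a = 0 ∧ y * b = 0 ∧ IsLeftRegular (x + y) := by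
  simp only [IsPWRing, isLeftRegular_iff_right_eq_zero_of_mul]

section Pi

variable {ι : Type*} {R : ι → Type*}

theorem Pi.dvd_iff [∀ i, Monoid (R i)] {a b : ∀ i, R i} : a ∣ b ↔ ∀ i, a i ∣ b i := by
  refine ⟨fun ⟨c, hc⟩ i ↦ ⟨c i, congrFun hc i⟩, fun h ↦ ?_⟩
  choose c hc using h
  exact ⟨c, funext hc⟩

theorem Pi.span_singleton_inf_span_singleton_eq_bot_iff [∀ i, CommSemiring (R i)]
    {a b : ∀ i, R i} :
    Ideal.span {a} ⊓ Ideal.span {b} = ⊥ ↔ ∀ i, Ideal.span {a i} ⊓ Ideal.span {b i} = ⊥ := by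
  classical
  simp only [Ideal.span_singleton_inf_span_singleton_eq_bot_iff]
  refine ⟨fun h i z haz hbz ↦ ?_, fun h z haz hbz ↦ ?_⟩
  · have hdvd (c : ∀ i, R i) (hc : c i ∣ z) : c ∣ Pi.single i z := by
      refine Pi.dvd_iff.2 fun j ↦ ?_
      rcases eq_or_ne j i with rfl | hj
      · simpa using hc
      · simp [Pi.single_eq_of_ne hj]
    simpa using congrFun (h _ (hdvd a haz) (hdvd b hbz)) i
  · exact funext fun i ↦ h i (z i) (Pi.dvd_iff.1 haz i) (Pi.dvd_iff.1 hbz i)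

theorem Pi.span_singleton_single_inf_span_singleton_single_eq_bot [DecidableEq ι]
    [∀ i, CommSemiring (R i)] {i : ι} {a b : R i}
    (hab : Ideal.span {a} ⊓ Ideal.span {b} = ⊥) :
    Ideal.span {Pi.single i a} ⊓ Ideal.span {Pi.single i b} = ⊥ := by
  refine Pi.span_singleton_inf_span_singleton_eq_bot_iff.2 fun j ↦ ?_
  rcases eq_or_ne j i with rfl | hj
  · simpa using hab
  · simp [Pi.single_eq_of_ne hj]

end Pi

/-- A product of commutative rings is a PW-ring iff each factor is. -/
theorem stmt2 {S : Type*} (R : S → Type*) [∀ α, CommRing (R α)] :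
    IsPWRing (∀ α, R α) ↔ ∀ α, IsPWRing (R α) := by
  classical
  simp only [isPWRing_iff]
  constructor
  · intro hPW α a b hab
    obtain ⟨x, y, hx, hy, hreg⟩ :=
      hPW _ _ (Pi.span_singleton_single_inf_span_singleton_single_eq_bot hab)
    refine ⟨x α, y α, by simpa using congrFun hx α, by simpa using congrFun hy α, ?_⟩
    exact Pi.isLeftRegular_iff.1 hreg α
  · intro hPW a b hab
    choose x y hx hy hreg using fun α ↦
      hPW α (a α) (b α) (Pi.span_singleton_inf_span_singleton_eq_bot_iff.1 hab α)
    exact ⟨x, y, funext hx, funext hy, Pi.isLeftRegular_iff.2 hreg⟩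
end

section
/- Let R be a reduced commutative ring. Then R is a W-ring if and only if for each ideal I of R, the ideal Ann(I) + Ann(Ann(I)) contains a regular element. Similarly, R is a UW-ring if and only if for each ideal I, the ideal Ann(I) + Ann(Ann(I)) contains a unit. -/
/-- `R` is a W-ring: for all ideals `I, J` with `I ⊓ J = 0`, `Ann(I) + Ann(J)` contains
a regular element. -/
def IsWRing (R : Type*) [CommRing R] : Prop :=
  ∀ I J : Ideal R, I ⊓ J = ⊥ →
    ∃ c ∈ Submodule.annihilator I + Submodule.annihilator J, ∀ z : R, c * z = 0 → z = 0

/-- `R` is a UW-ring: for all ideals `I, J` with `I ⊓ J = 0`, `Ann(I) + Ann(J)` contains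
a unit. -/
def IsUWRing (R : Type*) [CommRing R] : Prop :=
  ∀ I J : Ideal R, I ⊓ J = ⊥ →
    ∃ c ∈ Submodule.annihilator I + Submodule.annihilator J, IsUnit c

/-!
`Ann(I)` is the largest ideal meeting `I` trivially: any `J` with `I ⊓ J = 0` satisfies
`J * I = 0`, so `J ≤ Ann(I)` and hence `Ann(Ann(I)) ≤ Ann(J)`; and in a reduced ring
`I ⊓ Ann(I) = 0`, since every element of it squares to zero. Thus among all pairs `I, J`
with `I ⊓ J = 0`, the pair `I, Ann(I)` has the smallest `Ann(I) + Ann(J)`, and any property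
of elements holds somewhere in every such sum iff it holds somewhere in `Ann(I) + Ann(Ann(I))`.
-/

namespace Ideal

variable {R : Type*} [CommRing R]

theorem inf_annihilator_eq_bot [IsReduced R] (I : Ideal R) :
    I ⊓ Submodule.annihilator I = ⊥ := by
  refine eq_bot_iff.2 fun x ⟨hxI, hxA⟩ => ?_
  have hsq : x ^ 2 = 0 := by rw [pow_two]; exact Submodule.mem_annihilator.1 hxA x hxI
  exact (Submodule.mem_bot R).2 (IsReduced.eq_zero x ⟨2, hsq⟩)

theorem le_annihilator_of_inf_eq_bot {I J : Ideal R} (h : I ⊓ J = ⊥) :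
    J ≤ Submodule.annihilator I :=
  Submodule.le_annihilator_iff.2 <| le_bot_iff.1 <| mul_le_inf.trans (inf_comm I J ▸ h).le

theorem annihilator_add_annihilator_annihilator_le {I J : Ideal R} (h : I ⊓ J = ⊥) :
    Submodule.annihilator I + Submodule.annihilator (Submodule.annihilator I) ≤
      Submodule.annihilator I + Submodule.annihilator J :=
  add_le_add le_rfl (Submodule.annihilator_mono (le_annihilator_of_inf_eq_bot h))

theorem forall_inf_eq_bot_exists_mem_annihilator_add_iff [IsReduced R] (P : R → Prop) :
    (∀ I J : Ideal R, I ⊓ J = ⊥ →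
        ∃ c ∈ Submodule.annihilator I + Submodule.annihilator J, P c) ↔
      ∀ I : Ideal R,
        ∃ c ∈ Submodule.annihilator I + Submodule.annihilator (Submodule.annihilator I), P c := by
  refine ⟨fun h I => h I _ (inf_annihilator_eq_bot I), fun h I J hIJ => ?_⟩
  obtain ⟨c, hc, hP⟩ := h I
  exact ⟨c, annihilator_add_annihilator_annihilator_le hIJ hc, hP⟩

end Ideal

/-- A reduced ring is a W-ring (resp. UW-ring) iff for each ideal `I`,
`Ann(I) + Ann²(I)` contains a regular element (resp. a unit). -/
theorem stmt6 {R : Type*} [CommRing R] [IsReduced R] :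
    (IsWRing R ↔ ∀ I : Ideal R,
        ∃ c ∈ Submodule.annihilator I + Submodule.annihilator (Submodule.annihilator I),
          ∀ z : R, c * z = 0 → z = 0) ∧
    (IsUWRing R ↔ ∀ I : Ideal R,
        ∃ c ∈ Submodule.annihilator I + Submodule.annihilator (Submodule.annihilator I),
          IsUnit c) :=
  ⟨Ideal.forall_inf_eq_bot_exists_mem_annihilator_add_iff _,
    Ideal.forall_inf_eq_bot_exists_mem_annihilator_add_iff _⟩
end

section
/- A commutative ring R is real if and only if R is reduced and for each n ∈ ℕ and all a₁, …, aₙ ∈ R, the set of minimal primes containing a₁² + a₂² + ⋯ + aₙ² equals the intersection over i of the sets of minimal primes containing aᵢ. -/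
lemma key_exists {R : Type*} [CommRing R] [IsReduced R] {P : Ideal R}
    (hP : P ∈ minimalPrimes R) {x : R} (hx : x ∈ P) : ∃ s ∉ P, s * x = 0 := by
  haveI : P.IsPrime := hP.1.1
  have h1 : algebraMap R (Localization P.primeCompl) x ∈
      IsLocalRing.maximalIdeal (Localization P.primeCompl) :=
    (IsLocalization.AtPrime.to_map_mem_maximal_iff _ P x).mpr hx
  have h2 : IsNilpotent (algebraMap R (Localization P.primeCompl) x) :=
    by
      have h3 := IsLocalization.AtPrime.radical_map_of_mem_minimalPrimes
        (A := Localization P.primeCompl) P ⊥ hP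
      have hmem := Ideal.mem_map_of_mem (algebraMap R (Localization P.primeCompl)) hx
      rw [← h3, Ideal.map_bot] at hmem
      obtain ⟨k, hk⟩ := hmem
      exact ⟨k, by simpa using hk⟩
  obtain ⟨k, hk⟩ := h2
  rw [← map_pow, IsLocalization.map_eq_zero_iff P.primeCompl] at hk
  obtain ⟨m, hm⟩ := hk
  refine ⟨m, m.2, ?_⟩
  have : (↑m * x) ^ (k + 1) = 0 := by
    have : (↑m * x) ^ (k + 1) = (↑m : R) ^ k * x * (↑m * x ^ k) := by ring
    rw [this, hm, mul_zero]
  exact IsReduced.eq_zero _ ⟨k + 1, this⟩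

/-- A commutative ring is real iff it is reduced and for each `n` and `a₁, …, aₙ`,
the set of minimal primes containing `a₁² + ⋯ + aₙ²` is the intersection of the sets
of minimal primes containing each `aᵢ`. -/
theorem stmt9 {R : Type*} [CommRing R] :
    (∀ (n : ℕ) (a : Fin n → R), (∑ i, (a i) ^ 2 = 0) → ∀ i, a i = 0) ↔
      (IsReduced R ∧ ∀ (n : ℕ) (a : Fin n → R),
        {P : {P : Ideal R // P ∈ minimalPrimes R} | (∑ i, (a i) ^ 2) ∈ P.1} =
          ⋂ i : Fin n, {P : {P : Ideal R // P ∈ minimalPrimes R} | a i ∈ P.1}) := by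
  constructor
  · intro hreal
    have hred : IsReduced R := by
      constructor
      intro x ⟨k, hk⟩
      -- induction on k : if x^k = 0 then x = 0
      induction k generalizing x with
      | zero =>
        simp only [pow_zero] at hk
        simpa using congrArg (· * x) hk
      | succ k ih =>
        -- (x^?)... use: x^(k+1) = 0 ⇒ (x^k)^2 = x^(2k) = x^(k+1) * x^(k-1)... simpler:
        -- x^(k+1) = 0 ⇒ x^(2(k+1)) = 0 ⇒ (x^(k+1))² = 0... instead show x² = 0 ⇒ x = 0 and induct
        have sq : ∀ y : R, y ^ 2 = 0 → y = 0 := by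
          intro y hy
          have := hreal 1 (fun _ => y) (by simpa using hy) 0
          exact this
        -- from x^(k+1) = 0 deduce (x^⌈(k+1)/2⌉)² = 0 ... easier: x^(k+1)=0 → x^(2k) = 0? no if k=0.
        rcases Nat.eq_zero_or_pos k with rfl | h
        · simpa using hk
        · have : (x ^ k) ^ 2 = 0 := by
            have : x ^ (2 * k) = x ^ (k + 1) * x ^ (k - 1) := by
              rw [← pow_add]
              congr 1
              omega
            rw [← pow_mul, mul_comm, this, hk, zero_mul]
          exact ih x (sq _ this)
    refine ⟨hred, fun n a => ?_⟩
    ext P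
    simp only [Set.mem_setOf_eq, Set.mem_iInter]
    constructor
    · intro hsum i
      obtain ⟨s, hs, hsx⟩ := key_exists P.2 hsum
      have : ∑ j, (s * a j) ^ 2 = 0 := by
        have hsq : ∑ j, (s * a j) ^ 2 = s * (s * ∑ j, (a j) ^ 2) := by
          rw [Finset.mul_sum, Finset.mul_sum]
          apply Finset.sum_congr rfl; intros; ring
        rw [hsq, hsx, mul_zero]
      have hsa : s * a i = 0 := hreal n (fun j => s * a j) this i
      haveI : P.1.IsPrime := P.2.1.1
      rcases (Ideal.IsPrime.mem_or_mem ‹P.1.IsPrime› (by rw [hsa]; exact P.1.zero_mem)) with h | h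
      · exact absurd h hs
      · exact h
    · intro h
      exact Ideal.sum_mem _ fun i _ => Ideal.pow_mem_of_mem _ (h i) 2 two_pos
  · rintro ⟨hred, hmin⟩ n a hsum i
    have := hmin n a
    rw [hsum] at this
    have hall : ∀ P : {P : Ideal R // P ∈ minimalPrimes R}, a i ∈ P.1 := by
      intro P
      have hP : P ∈ ⋂ i : Fin n, {P : {P : Ideal R // P ∈ minimalPrimes R} | a i ∈ P.1} := by
        rw [← this]; exact P.1.zero_mem
      exact Set.mem_iInter.mp hP i
    -- a i is in every minimal prime, so in the nilradical, so nilpotent, so zero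
    have hnil : a i ∈ sInf (minimalPrimes R) := by
      rw [Ideal.mem_sInf]
      intro P hP
      exact hall ⟨P, hP⟩
    rw [minimalPrimes, Ideal.sInf_minimalPrimes] at hnil
    obtain ⟨k, hk⟩ := hnil
    exact IsReduced.eq_zero _ ⟨k, by simpa using hk⟩
end

section
/- Every PP-ring (a commutative ring in which the annihilator of every element is generated by an idempotent) is a UPW-ring; more precisely, for all a, b in a PP-ring R, Ann(a) + Ann(b) = Ann(ab). -/
/-!
If `Ann(a) = eR` with `e` idempotent, then any `c` killing `ab` splits as `c = ec + (1 - e)c`: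
`ec` kills `a` because `ea = 0`, and `cb ∈ Ann(a) = eR` is fixed by `e`, so `(1 - e)c` kills `b`.
If `aR ∩ bR = 0` then `ab = 0`, so `1 ∈ Ann(ab) = Ann(a) + Ann(b)`.
-/

section

variable {R : Type*} [CommRing R]

theorem IsIdempotentElem.mul_eq_self_of_mul_eq_zero {e a z : R} (he : IsIdempotentElem e)
    (hann : ∀ x : R, x * a = 0 ↔ ∃ r : R, x = e * r) (hz : z * a = 0) : e * z = z := by
  obtain ⟨r, rfl⟩ := (hann z).1 hz
  rw [← mul_assoc, he.eq]

theorem exists_add_eq_of_mul_mul_eq_zero {e a b c : R} (hea : e * a = 0)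
    (hfix : ∀ z : R, z * a = 0 → e * z = z) (hc : c * (a * b) = 0) :
    ∃ x y : R, x * a = 0 ∧ y * b = 0 ∧ c = x + y := by
  have hcb : e * (c * b) = c * b := hfix _ (by linear_combination hc)
  exact ⟨e * c, (1 - e) * c, by linear_combination c * hea, by linear_combination -hcb, by ring⟩

theorem mul_eq_zero_of_span_singleton_inf_eq_bot {a b : R}
    (h : Ideal.span {a} ⊓ Ideal.span {b} = ⊥) : a * b = 0 := by
  have hab : a * b ∈ Ideal.span {a} ⊓ Ideal.span {b} :=
    ⟨Ideal.mul_mem_right _ _ (Ideal.mem_span_singleton_self a),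
      Ideal.mul_mem_left _ _ (Ideal.mem_span_singleton_self b)⟩
  rwa [h, Ideal.mem_bot] at hab

end

/-- Every PP-ring is a UPW-ring; more precisely, in a PP-ring,
`Ann(a) + Ann(b) = Ann(ab)` for all `a, b`. -/
theorem stmt10 {R : Type*} [CommRing R]
    (hPP : ∀ a : R, ∃ e : R, e * e = e ∧ ∀ x : R, x * a = 0 ↔ ∃ r : R, x = e * r) :
    (∀ a b : R, Ideal.span {a} ⊓ Ideal.span {b} = ⊥ →
        ∃ x y : R, x * a = 0 ∧ y * b = 0 ∧ IsUnit (x + y)) ∧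
    (∀ a b c : R, c * (a * b) = 0 ↔ ∃ x y : R, x * a = 0 ∧ y * b = 0 ∧ c = x + y) := by
  have ann_mul : ∀ a b c : R, c * (a * b) = 0 ↔
      ∃ x y : R, x * a = 0 ∧ y * b = 0 ∧ c = x + y := by
    intro a b c
    refine ⟨fun hc => ?_, ?_⟩
    · obtain ⟨e, he, hann⟩ := hPP a
      exact exists_add_eq_of_mul_mul_eq_zero ((hann e).2 ⟨1, (mul_one e).symm⟩)
        (fun _ => IsIdempotentElem.mul_eq_self_of_mul_eq_zero he hann) hc
    · rintro ⟨x, y, hx, hy, rfl⟩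
      linear_combination b * hx + a * hy
  refine ⟨fun a b hab => ?_, ann_mul⟩
  obtain ⟨x, y, hx, hy, hxy⟩ :=
    (ann_mul a b 1).1 (by rw [mul_eq_zero_of_span_singleton_inf_eq_bot hab, mul_zero])
  exact ⟨x, y, hx, hy, hxy ▸ isUnit_one⟩
end

section
/- A completely regular Hausdorff space X is a WCF-space if it is cozero-complemented; that is, if for each f ∈ C(X) there exists g ∈ C(X) with Coz(f) ∩ Coz(g) = ∅ and int Z(f) ∩ int Z(g) = ∅, then any two disjoint cozero-sets in X can be separated by zero-sets with disjoint interiors. -/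
theorem Set.compl_subset_of_compl_inter_compl_eq_empty {α : Type*} {s t : Set α}
    (h : sᶜ ∩ tᶜ = ∅) : sᶜ ⊆ t := by
  simpa using Set.subset_compl_iff_disjoint_right.mpr (Set.disjoint_iff_inter_eq_empty.mpr h)

theorem stmt12_general {X : Type*} [TopologicalSpace X]
    (hcc : ∀ f : C(X, ℝ), ∃ g : C(X, ℝ),
      (f ⁻¹' {0})ᶜ ∩ (g ⁻¹' {0})ᶜ = ∅ ∧
      interior (f ⁻¹' {0}) ∩ interior (g ⁻¹' {0}) = ∅) :
    ∀ f g : C(X, ℝ), (f ⁻¹' {0})ᶜ ∩ (g ⁻¹' {0})ᶜ = ∅ →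
      ∃ h₁ h₂ : C(X, ℝ), (f ⁻¹' {0})ᶜ ⊆ h₁ ⁻¹' {0} ∧ (g ⁻¹' {0})ᶜ ⊆ h₂ ⁻¹' {0} ∧
        interior (h₁ ⁻¹' {0}) ∩ interior (h₂ ⁻¹' {0}) = ∅ := by
  intro f g hfg
  obtain ⟨f', hff', hint⟩ := hcc f
  refine ⟨f', f, Set.compl_subset_of_compl_inter_compl_eq_empty hff', ?_, ?_⟩
  · exact Set.compl_subset_of_compl_inter_compl_eq_empty (Set.inter_comm _ _ ▸ hfg)
  · rwa [Set.inter_comm]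

/-- A cozero-complemented completely regular Hausdorff space is a WCF-space. -/
theorem stmt12 {X : Type*} [TopologicalSpace X] [T2Space X] [CompletelyRegularSpace X]
    (hcc : ∀ f : C(X, ℝ), ∃ g : C(X, ℝ),
      (f ⁻¹' {0})ᶜ ∩ (g ⁻¹' {0})ᶜ = ∅ ∧
      interior (f ⁻¹' {0}) ∩ interior (g ⁻¹' {0}) = ∅) :
    ∀ f g : C(X, ℝ), (f ⁻¹' {0})ᶜ ∩ (g ⁻¹' {0})ᶜ = ∅ →
      ∃ h₁ h₂ : C(X, ℝ), (f ⁻¹' {0})ᶜ ⊆ h₁ ⁻¹' {0} ∧ (g ⁻¹' {0})ᶜ ⊆ h₂ ⁻¹' {0} ∧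
        interior (h₁ ⁻¹' {0}) ∩ interior (h₂ ⁻¹' {0}) = ∅ :=
  stmt12_general hcc
end

section
/- Let X be a topological space and Y an open subspace of X. If any two disjoint open subsets of X can be separated by zero-sets of X with disjoint interiors, then any two disjoint open subsets of Y can be separated by zero-sets of Y with disjoint interiors (interiors computed in Y). -/
open Topology

def WEDSpace (X : Type*) [TopologicalSpace X] : Prop :=
  ∀ U V : Set X, IsOpen U → IsOpen V → U ∩ V = ∅ →
    ∃ f g : C(X, ℝ), U ⊆ interior (f ⁻¹' {0}) ∧ V ⊆ interior (g ⁻¹' {0}) ∧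
      interior (f ⁻¹' {0}) ∩ interior (g ⁻¹' {0}) = ∅

theorem Topology.IsOpenEmbedding.interior_zeroSet_comp {X Y : Type*} [TopologicalSpace X]
    [TopologicalSpace Y] {e : C(Y, X)} (he : IsOpenEmbedding e) (f : C(X, ℝ)) :
    interior ((f.comp e) ⁻¹' {0}) = e ⁻¹' interior (f ⁻¹' {0}) :=
  (he.isOpenMap.preimage_interior_eq_interior_preimage e.continuous (f ⁻¹' {0})).symm

theorem Topology.IsOpenEmbedding.wedSpace {X Y : Type*} [TopologicalSpace X]
    [TopologicalSpace Y] {e : C(Y, X)} (he : IsOpenEmbedding e) (hX : WEDSpace X) :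
    WEDSpace Y := by
  intro U V hU hV hUV
  have hUV' : e '' U ∩ e '' V = ∅ := by
    rw [← Set.image_inter he.injective, hUV, Set.image_empty]
  obtain ⟨f, g, hfU, hgV, hfg⟩ :=
    hX _ _ (he.isOpenMap U hU) (he.isOpenMap V hV) hUV'
  refine ⟨f.comp e, g.comp e, ?_, ?_, ?_⟩
  · rw [he.interior_zeroSet_comp]
    exact Set.image_subset_iff.mp hfU
  · rw [he.interior_zeroSet_comp]
    exact Set.image_subset_iff.mp hgV
  · rw [he.interior_zeroSet_comp, he.interior_zeroSet_comp, ← Set.preimage_inter, hfg,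
      Set.preimage_empty]

/-- An open subspace of a WED-space is a WED-space. -/
theorem stmt13 {X : Type*} [TopologicalSpace X] (Y : Set X) (hY : IsOpen Y)
    (hWED : ∀ U V : Set X, IsOpen U → IsOpen V → U ∩ V = ∅ →
      ∃ f g : C(X, ℝ), U ⊆ interior (f ⁻¹' {0}) ∧ V ⊆ interior (g ⁻¹' {0}) ∧
        interior (f ⁻¹' {0}) ∩ interior (g ⁻¹' {0}) = ∅) :
    ∀ U V : Set Y, IsOpen U → IsOpen V → U ∩ V = ∅ →
      ∃ f g : C(Y, ℝ), U ⊆ interior (f ⁻¹' {0}) ∧ V ⊆ interior (g ⁻¹' {0}) ∧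
        interior (f ⁻¹' {0}) ∩ interior (g ⁻¹' {0}) = ∅ :=
  IsOpenEmbedding.wedSpace (e := ⟨Subtype.val, continuous_subtype_val⟩)
    hY.isOpenEmbedding_subtypeVal hWED
end

section
/- Let X be a dense subspace of a topological space Y. If every zero-set of X is the trace on X of a zero-set of Y (X is z-embedded) and every cozero-set of X is the trace of a cozero-set of Y, then X is a WCF-space if and only if Y is a WCF-space. -/
/-!
For dense `X ⊆ Y`, an inclusion of an open set in a closed set of `Y` can be checked on traces.
So extending to `Y` the zero-sets that separate the traces of two disjoint cozero-sets of `Y`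
separates the cozero-sets themselves; conversely, extending two disjoint cozero-sets of `X` gives
disjoint cozero-sets of `Y`, whose separating zero-sets restrict to `X`. Disjointness of interiors
survives because the interior in `X` of the trace of a closed set lies in the trace of its interior.
-/

open Set

def IsWCF (T : Type*) [TopologicalSpace T] : Prop :=
  ∀ f g : C(T, ℝ), (f ⁻¹' {0})ᶜ ∩ (g ⁻¹' {0})ᶜ = ∅ →
    ∃ h₁ h₂ : C(T, ℝ), (f ⁻¹' {0})ᶜ ⊆ h₁ ⁻¹' {0} ∧ (g ⁻¹' {0})ᶜ ⊆ h₂ ⁻¹' {0} ∧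
      interior (h₁ ⁻¹' {0}) ∩ interior (h₂ ⁻¹' {0}) = ∅

theorem ContinuousMap.isClosed_zeroSet {T : Type*} [TopologicalSpace T] (f : C(T, ℝ)) :
    IsClosed (f ⁻¹' {0}) :=
  isClosed_singleton.preimage f.continuous

namespace Dense

variable {Y : Type*} [TopologicalSpace Y] {X : Set Y}

theorem subset_of_preimage_val_subset (hX : Dense X) {U Z : Set Y} (hU : IsOpen U)
    (hZ : IsClosed Z) (h : (Subtype.val : X → Y) ⁻¹' U ⊆ Subtype.val ⁻¹' Z) : U ⊆ Z := by
  refine (hX.open_subset_closure_inter hU).trans ?_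
  rw [← hZ.closure_eq]
  refine closure_mono ?_
  rintro y ⟨hyU, hyX⟩
  exact h (show (⟨y, hyX⟩ : X) ∈ (Subtype.val : X → Y) ⁻¹' U from hyU)

theorem eq_empty_of_preimage_val_eq_empty (hX : Dense X) {U : Set Y} (hU : IsOpen U)
    (h : (Subtype.val : X → Y) ⁻¹' U = ∅) : U = ∅ :=
  subset_empty_iff.mp <| hX.subset_of_preimage_val_subset hU isClosed_empty (h ▸ empty_subset _)

theorem interior_preimage_val_subset (hX : Dense X) {Z : Set Y} (hZ : IsClosed Z) :
    interior ((Subtype.val : X → Y) ⁻¹' Z) ⊆ Subtype.val ⁻¹' interior Z := by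
  obtain ⟨U, hU, hUX⟩ := isOpen_induced_iff.mp (isOpen_interior (s := (Subtype.val : X → Y) ⁻¹' Z))
  rw [← hUX]
  have hUZ : U ⊆ Z := hX.subset_of_preimage_val_subset hU hZ (hUX ▸ interior_subset)
  exact preimage_mono (interior_maximal hUZ hU)

end Dense

namespace IsWCF

variable {Y : Type*} [TopologicalSpace Y] {X : Set Y}

theorem of_dense_of_zeroSet_trace (hX : Dense X)
    (hz : ∀ f : C(X, ℝ), ∃ F : C(Y, ℝ), f ⁻¹' {0} = Subtype.val ⁻¹' (F ⁻¹' {0}))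
    (hWCF : IsWCF X) : IsWCF Y := by
  intro F G hFG
  obtain ⟨h₁, h₂, hsub₁, hsub₂, hint⟩ := hWCF (F.restrict X) (G.restrict X) <|
    show Subtype.val ⁻¹' ((F ⁻¹' {0})ᶜ ∩ (G ⁻¹' {0})ᶜ) = ∅ by rw [hFG, preimage_empty]
  obtain ⟨H₁, hH₁⟩ := hz h₁
  obtain ⟨H₂, hH₂⟩ := hz h₂
  refine ⟨H₁, H₂, ?_, ?_, ?_⟩
  · exact hX.subset_of_preimage_val_subset F.isClosed_zeroSet.isOpen_compl H₁.isClosed_zeroSet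
      (hH₁ ▸ hsub₁)
  · exact hX.subset_of_preimage_val_subset G.isClosed_zeroSet.isOpen_compl H₂.isClosed_zeroSet
      (hH₂ ▸ hsub₂)
  · refine hX.eq_empty_of_preimage_val_eq_empty (isOpen_interior.inter isOpen_interior) ?_
    rw [preimage_inter, ← subset_empty_iff, ← hint, hH₁, hH₂]
    exact inter_subset_inter (preimage_interior_subset_interior_preimage continuous_subtype_val)
      (preimage_interior_subset_interior_preimage continuous_subtype_val)

theorem of_dense_of_cozeroSet_trace (hX : Dense X)
    (hcoz : ∀ f : C(X, ℝ), ∃ F : C(Y, ℝ), (f ⁻¹' {0})ᶜ = Subtype.val ⁻¹' (F ⁻¹' {0})ᶜ)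
    (hWCF : IsWCF Y) : IsWCF X := by
  intro f g hfg
  obtain ⟨F, hF⟩ := hcoz f
  obtain ⟨G, hG⟩ := hcoz g
  obtain ⟨H₁, H₂, hsub₁, hsub₂, hint⟩ := hWCF F G <|
    hX.eq_empty_of_preimage_val_eq_empty
      (F.isClosed_zeroSet.isOpen_compl.inter G.isClosed_zeroSet.isOpen_compl)
      (by rw [preimage_inter, ← hF, ← hG, hfg])
  refine ⟨H₁.restrict X, H₂.restrict X, hF ▸ preimage_mono hsub₁, hG ▸ preimage_mono hsub₂, ?_⟩
  refine subset_empty_iff.mp ?_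
  calc interior ((H₁.restrict X) ⁻¹' {0}) ∩ interior ((H₂.restrict X) ⁻¹' {0})
      ⊆ Subtype.val ⁻¹' (interior (H₁ ⁻¹' {0}) ∩ interior (H₂ ⁻¹' {0})) :=
        inter_subset_inter (hX.interior_preimage_val_subset H₁.isClosed_zeroSet)
          (hX.interior_preimage_val_subset H₂.isClosed_zeroSet)
    _ = ∅ := by rw [hint, preimage_empty]

end IsWCF

theorem stmt14_general {Y : Type*} [TopologicalSpace Y]
    (X : Set Y) (hdense : Dense X)
    (hz : ∀ f : C(X, ℝ), ∃ F : C(Y, ℝ),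
      f ⁻¹' {0} = (Subtype.val : X → Y) ⁻¹' (F ⁻¹' {0}))
    (hcoz : ∀ f : C(X, ℝ), ∃ F : C(Y, ℝ),
      (f ⁻¹' {0})ᶜ = (Subtype.val : X → Y) ⁻¹' ((F ⁻¹' {0})ᶜ)) :
    (∀ f g : C(X, ℝ), (f ⁻¹' {0})ᶜ ∩ (g ⁻¹' {0})ᶜ = ∅ →
      ∃ h₁ h₂ : C(X, ℝ), (f ⁻¹' {0})ᶜ ⊆ h₁ ⁻¹' {0} ∧ (g ⁻¹' {0})ᶜ ⊆ h₂ ⁻¹' {0} ∧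
        interior (h₁ ⁻¹' {0}) ∩ interior (h₂ ⁻¹' {0}) = ∅) ↔
    (∀ f g : C(Y, ℝ), (f ⁻¹' {0})ᶜ ∩ (g ⁻¹' {0})ᶜ = ∅ →
      ∃ h₁ h₂ : C(Y, ℝ), (f ⁻¹' {0})ᶜ ⊆ h₁ ⁻¹' {0} ∧ (g ⁻¹' {0})ᶜ ⊆ h₂ ⁻¹' {0} ∧
        interior (h₁ ⁻¹' {0}) ∩ interior (h₂ ⁻¹' {0}) = ∅) :=
  show IsWCF X ↔ IsWCF Y from
    ⟨IsWCF.of_dense_of_zeroSet_trace hdense hz, IsWCF.of_dense_of_cozeroSet_trace hdense hcoz⟩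

/-- If `X` is a dense z-embedded subspace of `Y` (zero-sets and cozero-sets of `X` are
traces of zero-sets and cozero-sets of `Y`), then `X` is a WCF-space iff `Y` is. -/
theorem stmt14 {Y : Type*} [TopologicalSpace Y] [T2Space Y] [CompletelyRegularSpace Y]
    (X : Set Y) (hdense : Dense X)
    (hz : ∀ f : C(X, ℝ), ∃ F : C(Y, ℝ),
      f ⁻¹' {0} = (Subtype.val : X → Y) ⁻¹' (F ⁻¹' {0}))
    (hcoz : ∀ f : C(X, ℝ), ∃ F : C(Y, ℝ),
      (f ⁻¹' {0})ᶜ = (Subtype.val : X → Y) ⁻¹' ((F ⁻¹' {0})ᶜ)) :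
    (∀ f g : C(X, ℝ), (f ⁻¹' {0})ᶜ ∩ (g ⁻¹' {0})ᶜ = ∅ →
      ∃ h₁ h₂ : C(X, ℝ), (f ⁻¹' {0})ᶜ ⊆ h₁ ⁻¹' {0} ∧ (g ⁻¹' {0})ᶜ ⊆ h₂ ⁻¹' {0} ∧
        interior (h₁ ⁻¹' {0}) ∩ interior (h₂ ⁻¹' {0}) = ∅) ↔
    (∀ f g : C(Y, ℝ), (f ⁻¹' {0})ᶜ ∩ (g ⁻¹' {0})ᶜ = ∅ →
      ∃ h₁ h₂ : C(Y, ℝ), (f ⁻¹' {0})ᶜ ⊆ h₁ ⁻¹' {0} ∧ (g ⁻¹' {0})ᶜ ⊆ h₂ ⁻¹' {0} ∧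
        interior (h₁ ⁻¹' {0}) ∩ interior (h₂ ⁻¹' {0}) = ∅) :=
  stmt14_general X hdense hz hcoz
end

section
/- The ring C(X) of continuous real-valued functions on a completely regular Hausdorff space X is a PW-ring if and only if X is a WCF-space. -/
/-!
Both conditions are statements about zero sets. For continuous maps, `h * f = 0` says exactly that
`h` vanishes on the cozero set of `f`, and `h` is a non-zerodivisor exactly when its zero set has
empty interior: a cozero set inside `Z(h)` is open, hence inside `int Z(h)`, and conversely complete
regularity puts the cozero set of a nonzero function inside any nonempty open set. A PW-witness
`h₁, h₂` is then WCF because `Z(h₁) ∩ Z(h₂) ⊆ Z(h₁ + h₂)`, and a WCF-witness yields the PW-witness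
`h₁², h₂²` because `Z(h₁² + h₂²) = Z(h₁) ∩ Z(h₂)`.
-/

open Set

namespace ContinuousMap

variable {X R : Type*} [TopologicalSpace X] [TopologicalSpace R]

section NoZeroDivisors

variable [MulZeroClass R] [NoZeroDivisors R] [ContinuousMul R]

theorem mul_eq_zero_iff_compl_preimage_zero_subset {h f : C(X, R)} :
    h * f = 0 ↔ (f ⁻¹' {0})ᶜ ⊆ h ⁻¹' {0} := by
  simp only [ContinuousMap.ext_iff, mul_apply, zero_apply, mul_eq_zero, subset_def,
    mem_compl_iff, mem_preimage, mem_singleton_iff]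
  exact forall_congr' fun x ↦ or_iff_not_imp_right

theorem mul_eq_zero_iff_compl_preimage_zero_inter_eq_empty {f g : C(X, R)} :
    f * g = 0 ↔ (f ⁻¹' {0})ᶜ ∩ (g ⁻¹' {0})ᶜ = ∅ := by
  simp only [ContinuousMap.ext_iff, mul_apply, zero_apply, mul_eq_zero, eq_empty_iff_forall_notMem,
    mem_inter_iff, mem_compl_iff, mem_preimage, mem_singleton_iff]
  exact forall_congr' fun x ↦ by tauto

theorem eq_zero_of_mul_eq_zero_of_interior_preimage_zero_eq_empty [T1Space R] {h k : C(X, R)}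
    (hh : interior (h ⁻¹' {0}) = ∅) (hk : h * k = 0) : k = 0 := by
  have hcoz : IsOpen (k ⁻¹' {0})ᶜ := (isClosed_singleton.preimage k.continuous).isOpen_compl
  have : (k ⁻¹' {0})ᶜ = ∅ :=
    subset_eq_empty (interior_maximal (mul_eq_zero_iff_compl_preimage_zero_subset.mp hk) hcoz) hh
  ext x
  simpa using eq_empty_iff_forall_notMem.mp this x

end NoZeroDivisors

theorem preimage_zero_mul_self_add_mul_self [Ring R] [LinearOrder R] [IsStrictOrderedRing R]
    [IsTopologicalRing R] (h₁ h₂ : C(X, R)) :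
    (h₁ * h₁ + h₂ * h₂) ⁻¹' {0} = h₁ ⁻¹' {0} ∩ h₂ ⁻¹' {0} := by
  ext x
  simp [mul_self_add_mul_self_eq_zero]

theorem mem_nonZeroDivisors_iff_interior_preimage_zero_eq_empty [CompletelyRegularSpace X]
    {h : C(X, ℝ)} : h ∈ nonZeroDivisors C(X, ℝ) ↔ interior (h ⁻¹' {0}) = ∅ := by
  rw [mem_nonZeroDivisors_iff_left]
  refine ⟨fun hreg ↦ ?_, fun hh k ↦ eq_zero_of_mul_eq_zero_of_interior_preimage_zero_eq_empty hh⟩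
  by_contra hne
  obtain ⟨x, hx⟩ := nonempty_iff_ne_empty.mpr hne
  obtain ⟨b, hb, hbx, hb_one⟩ :=
    CompletelyRegularSpace.completely_regular_isOpen x _ isOpen_interior hx
  let k : C(X, ℝ) := ⟨fun y ↦ 1 - b y, by fun_prop⟩
  have hk : (k ⁻¹' {0})ᶜ ⊆ interior (h ⁻¹' {0}) := fun y hy ↦ by
    by_contra hy'
    exact hy (by simp [k, hb_one hy'])
  have hkx : k x = 1 := by simp [k, hbx]
  have := hreg k (mul_eq_zero_iff_compl_preimage_zero_subset.mpr (hk.trans interior_subset))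
  simp [this] at hkx

end ContinuousMap

open ContinuousMap

theorem stmt15_general {X : Type*} [TopologicalSpace X] [CompletelyRegularSpace X] :
    (∀ f g : C(X, ℝ), f * g = 0 →
      ∃ h₁ h₂ : C(X, ℝ), h₁ * f = 0 ∧ h₂ * g = 0 ∧
        (∀ k : C(X, ℝ), (h₁ + h₂) * k = 0 → k = 0)) ↔
    (∀ f g : C(X, ℝ), (f ⁻¹' {0})ᶜ ∩ (g ⁻¹' {0})ᶜ = ∅ →
      ∃ h₁ h₂ : C(X, ℝ), (f ⁻¹' {0})ᶜ ⊆ h₁ ⁻¹' {0} ∧ (g ⁻¹' {0})ᶜ ⊆ h₂ ⁻¹' {0} ∧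
        interior (h₁ ⁻¹' {0}) ∩ interior (h₂ ⁻¹' {0}) = ∅) := by
  constructor
  · intro pw f g hfg
    obtain ⟨h₁, h₂, hf, hg, hreg⟩ :=
      pw f g (mul_eq_zero_iff_compl_preimage_zero_inter_eq_empty.mpr hfg)
    have hsum : interior ((h₁ + h₂) ⁻¹' {0}) = ∅ :=
      mem_nonZeroDivisors_iff_interior_preimage_zero_eq_empty.mp
        (mem_nonZeroDivisors_iff_left.mpr hreg)
    refine ⟨h₁, h₂, mul_eq_zero_iff_compl_preimage_zero_subset.mp hf,
      mul_eq_zero_iff_compl_preimage_zero_subset.mp hg, ?_⟩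
    rw [← interior_inter]
    exact subset_eq_empty (interior_mono fun x hx ↦ by simp_all) hsum
  · intro wcf f g hfg
    obtain ⟨h₁, h₂, hf, hg, hint⟩ :=
      wcf f g (mul_eq_zero_iff_compl_preimage_zero_inter_eq_empty.mp hfg)
    refine ⟨h₁ * h₁, h₂ * h₂, ?_, ?_, fun k ↦
      eq_zero_of_mul_eq_zero_of_interior_preimage_zero_eq_empty ?_⟩
    · rw [mul_assoc, mul_eq_zero_iff_compl_preimage_zero_subset.mpr hf, mul_zero]
    · rw [mul_assoc, mul_eq_zero_iff_compl_preimage_zero_subset.mpr hg, mul_zero]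
    · rw [preimage_zero_mul_self_add_mul_self, interior_inter, hint]

/-- `C(X)` is a PW-ring iff `X` is a WCF-space. -/
theorem stmt15 {X : Type*} [TopologicalSpace X] [T2Space X] [CompletelyRegularSpace X] :
    (∀ f g : C(X, ℝ), f * g = 0 →
      ∃ h₁ h₂ : C(X, ℝ), h₁ * f = 0 ∧ h₂ * g = 0 ∧
        (∀ k : C(X, ℝ), (h₁ + h₂) * k = 0 → k = 0)) ↔
    (∀ f g : C(X, ℝ), (f ⁻¹' {0})ᶜ ∩ (g ⁻¹' {0})ᶜ = ∅ →
      ∃ h₁ h₂ : C(X, ℝ), (f ⁻¹' {0})ᶜ ⊆ h₁ ⁻¹' {0} ∧ (g ⁻¹' {0})ᶜ ⊆ h₂ ⁻¹' {0} ∧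
        interior (h₁ ⁻¹' {0}) ∩ interior (h₂ ⁻¹' {0}) = ∅) :=
  stmt15_general
end

section
/- Let X be a topological space with exactly one non-isolated point σ, where σ is not a Gδ-point (i.e., {σ} is not a countable intersection of open sets). Then X is a WCF-space if and only if for any two disjoint cozero-sets of X, one of them is clopen. -/
/-!
If `A`, `B` are disjoint cozero-sets neither of which is clopen, then `σ` lies in the closure
of both, so any zero-sets `Z₁ ⊇ A`, `Z₂ ⊇ B` contain `σ`. Their intersection is a Gδ-set, hence
not `{σ}`, so it contains some isolated point, which lies in `int Z₁ ∩ int Z₂`. Conversely, if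
`A` is clopen then `A` and its complement are zero-sets with disjoint interiors.
-/

open Set

section OneNonIsolatedPoint

variable {X : Type*} [TopologicalSpace X] {σ : X}

theorem closure_subset_insert_of_isOpen_singleton (hiso : ∀ x : X, x ≠ σ → IsOpen ({x} : Set X))
    (S : Set X) : closure S ⊆ insert σ S := by
  intro x hx
  by_contra hxn
  obtain ⟨hxσ, hxS⟩ := not_or.1 hxn
  obtain ⟨y, rfl, hy⟩ := mem_closure_iff.1 hx {x} (hiso x hxσ) rfl
  exact hxS hy

theorem IsOpen.isClopen_of_notMem_closure (hiso : ∀ x : X, x ≠ σ → IsOpen ({x} : Set X))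
    {U : Set X} (hU : IsOpen U) (hσ : σ ∉ closure U) : IsClopen U := by
  refine ⟨isClosed_of_closure_subset fun x hx ↦ ?_, hU⟩
  rcases closure_subset_insert_of_isOpen_singleton hiso U hx with rfl | hxU
  · exact absurd hx hσ
  · exact hxU

theorem isGδ_preimage_zero (h : C(X, ℝ)) : IsGδ (h ⁻¹' {0}) :=
  isClosed_singleton.isGδ.preimage h.continuous

theorem interior_inter_preimage_zero_nonempty (hiso : ∀ x : X, x ≠ σ → IsOpen ({x} : Set X))
    (hGδ : ¬ IsGδ ({σ} : Set X)) {h₁ h₂ : C(X, ℝ)} (hσ₁ : h₁ σ = 0) (hσ₂ : h₂ σ = 0) :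
    (interior (h₁ ⁻¹' {0}) ∩ interior (h₂ ⁻¹' {0})).Nonempty := by
  have hne : h₁ ⁻¹' {0} ∩ h₂ ⁻¹' {0} ≠ {σ} := fun heq ↦
    hGδ (heq ▸ (isGδ_preimage_zero h₁).inter (isGδ_preimage_zero h₂))
  obtain ⟨x, hx, hxσ⟩ : ∃ x ∈ h₁ ⁻¹' {0} ∩ h₂ ⁻¹' {0}, x ≠ σ := by
    by_contra! hall
    exact hne (Subset.antisymm hall (singleton_subset_iff.2 ⟨hσ₁, hσ₂⟩))
  have hxo := hiso x hxσ
  exact ⟨x, interior_maximal (singleton_subset_iff.2 hx.1) hxo rfl,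
    interior_maximal (singleton_subset_iff.2 hx.2) hxo rfl⟩

theorem IsOpen.apply_eq_zero_of_subset_preimage_zero
    (hiso : ∀ x : X, x ≠ σ → IsOpen ({x} : Set X)) {U : Set X} (hU : IsOpen U)
    (hUc : ¬ IsClopen U) {h : C(X, ℝ)} (hZ : U ⊆ h ⁻¹' {0}) : h σ = 0 := by
  have hσ : σ ∈ closure U := by
    by_contra hσ
    exact hUc (hU.isClopen_of_notMem_closure hiso hσ)
  exact (isClosed_singleton.preimage h.continuous).closure_subset_iff.2 hZ hσ

end OneNonIsolatedPoint

theorem IsClopen.exists_preimage_zero_eq {X : Type*} [TopologicalSpace X] {S : Set X}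
    (hS : IsClopen S) : ∃ h : C(X, ℝ), h ⁻¹' {0} = S :=
  ⟨⟨Sᶜ.indicator 1, hS.compl.continuous_indicator continuous_const⟩, by ext; simp⟩

theorem IsClopen.exists_preimage_zero_separating {X : Type*} [TopologicalSpace X] {A B : Set X}
    (hA : IsClopen A) (hAB : A ∩ B = ∅) :
    ∃ h₁ h₂ : C(X, ℝ), A ⊆ h₁ ⁻¹' {0} ∧ B ⊆ h₂ ⁻¹' {0} ∧
      interior (h₁ ⁻¹' {0}) ∩ interior (h₂ ⁻¹' {0}) = ∅ := by
  obtain ⟨h₁, rfl⟩ := hA.exists_preimage_zero_eq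
  obtain ⟨h₂, hh₂⟩ := hA.compl.exists_preimage_zero_eq
  refine ⟨h₁, h₂, subset_rfl, hh₂ ▸ fun x hxB hxA ↦ hAB.subset ⟨hxA, hxB⟩, ?_⟩
  rw [hh₂]
  exact disjoint_iff_inter_eq_empty.1 (disjoint_compl_right.mono interior_subset interior_subset)

theorem stmt17_general {X : Type*} [TopologicalSpace X]
    (σ : X) (hiso : ∀ x : X, x ≠ σ → IsOpen ({x} : Set X))
    (hGδ : ¬ IsGδ ({σ} : Set X)) :
    (∀ f g : C(X, ℝ), (f ⁻¹' {0})ᶜ ∩ (g ⁻¹' {0})ᶜ = ∅ →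
      ∃ h₁ h₂ : C(X, ℝ), (f ⁻¹' {0})ᶜ ⊆ h₁ ⁻¹' {0} ∧ (g ⁻¹' {0})ᶜ ⊆ h₂ ⁻¹' {0} ∧
        interior (h₁ ⁻¹' {0}) ∩ interior (h₂ ⁻¹' {0}) = ∅) ↔
    (∀ f g : C(X, ℝ), (f ⁻¹' {0})ᶜ ∩ (g ⁻¹' {0})ᶜ = ∅ →
      IsClopen ((f ⁻¹' {0})ᶜ) ∨ IsClopen ((g ⁻¹' {0})ᶜ)) := by
  have isOpen_cozero (f : C(X, ℝ)) : IsOpen (f ⁻¹' {0})ᶜ :=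
    (isClosed_singleton.preimage f.continuous).isOpen_compl
  constructor
  · intro hwcf f g hdisj
    by_contra! hcon
    obtain ⟨h₁, h₂, hZ₁, hZ₂, hint⟩ := hwcf f g hdisj
    have hσ₁ := (isOpen_cozero f).apply_eq_zero_of_subset_preimage_zero hiso hcon.1 hZ₁
    have hσ₂ := (isOpen_cozero g).apply_eq_zero_of_subset_preimage_zero hiso hcon.2 hZ₂
    exact (interior_inter_preimage_zero_nonempty hiso hGδ hσ₁ hσ₂).ne_empty hint
  · intro hcl f g hdisj
    rcases hcl f g hdisj with hf | hg
    · exact hf.exists_preimage_zero_separating hdisj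
    · obtain ⟨h₂, h₁, hZ₂, hZ₁, hint⟩ :=
        hg.exists_preimage_zero_separating (inter_comm _ _ ▸ hdisj)
      exact ⟨h₁, h₂, hZ₁, hZ₂, inter_comm _ _ ▸ hint⟩

/-- Let `X` have exactly one non-isolated point `σ` which is not a Gδ-point. Then `X`
is a WCF-space iff for any two disjoint cozero-sets, one of them is clopen. -/
theorem stmt17 {X : Type*} [TopologicalSpace X] [T2Space X] [CompletelyRegularSpace X]
    (σ : X) (hiso : ∀ x : X, x ≠ σ → IsOpen ({x} : Set X))
    (hniso : ¬ IsOpen ({σ} : Set X)) (hGδ : ¬ IsGδ ({σ} : Set X)) :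
    (∀ f g : C(X, ℝ), (f ⁻¹' {0})ᶜ ∩ (g ⁻¹' {0})ᶜ = ∅ →
      ∃ h₁ h₂ : C(X, ℝ), (f ⁻¹' {0})ᶜ ⊆ h₁ ⁻¹' {0} ∧ (g ⁻¹' {0})ᶜ ⊆ h₂ ⁻¹' {0} ∧
        interior (h₁ ⁻¹' {0}) ∩ interior (h₂ ⁻¹' {0}) = ∅) ↔
    (∀ f g : C(X, ℝ), (f ⁻¹' {0})ᶜ ∩ (g ⁻¹' {0})ᶜ = ∅ →
      IsClopen ((f ⁻¹' {0})ᶜ) ∨ IsClopen ((g ⁻¹' {0})ᶜ)) :=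
  stmt17_general σ hiso hGδ
end

section
/- Let R be a reduced commutative ring, Y = Min(R) its space of minimal primes with the hull-kernel topology. If R is a W-ring, then any two disjoint open sets in Y can be separated by sets of the form h_m(x), h_m(y) (basic closed sets) with h_m(x) ∩ h_m(y) = ∅. -/
/-- In a reduced ring, every element of a minimal prime is annihilated by an element
outside the prime. -/
lemma stmt18_aux {R : Type*} [CommRing R] [IsReduced R] {P : Ideal R}
    (hP : P ∈ minimalPrimes R) {a : R} (ha : a ∈ P) : ∃ s ∉ P, s * a = 0 := by
  haveI hPp : P.IsPrime := hP.1.1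
  set S := Localization P.primeCompl
  have hmem : algebraMap R S a ∈ IsLocalRing.maximalIdeal S :=
    (IsLocalization.AtPrime.to_map_mem_maximal_iff S P a).mpr ha
  have hnil : IsNilpotent (algebraMap R S a) :=
    by
      have h := IsLocalization.AtPrime.radical_map_of_mem_minimalPrimes (A := S) P ⊥ hP
      rw [Ideal.map_bot, IsLocalization.AtPrime.map_eq_maximalIdeal P S] at h
      rw [← h] at hmem
      obtain ⟨n, hn⟩ := hmem
      exact ⟨n, by simpa using hn⟩
  obtain ⟨n, hn⟩ := hnil
  rw [← map_pow] at hn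
  obtain ⟨s, hs⟩ := (IsLocalization.map_eq_zero_iff P.primeCompl S _).mp hn
  refine ⟨(s : R), s.2, ?_⟩
  have hsa : ((s : R) * a) ^ (n + 1) = 0 := by
    have : ((s : R) * a) ^ (n + 1) = ((s : R) ^ n * a) * ((s : R) * a ^ n) := by ring
    rw [this, hs, mul_zero]
  exact IsReduced.eq_zero _ ⟨n + 1, hsa⟩

/-- If a reduced commutative ring `R` is a W-ring, then any two disjoint open sets in
`Min(R)` (with the hull-kernel/Zariski topology) can be separated by disjoint basic
closed sets `h_m(x)`, `h_m(y)`. -/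
theorem stmt18 {R : Type*} [CommRing R] [IsReduced R]
    (hW : ∀ I J : Ideal R, I ⊓ J = ⊥ →
      ∃ x y : R, (∀ a ∈ I, x * a = 0) ∧ (∀ b ∈ J, y * b = 0) ∧
        (∀ z : R, (x + y) * z = 0 → z = 0)) :
    ∀ U V : Set {P : PrimeSpectrum R // P.asIdeal ∈ minimalPrimes R},
      IsOpen U → IsOpen V → U ∩ V = ∅ →
      ∃ x y : R,
        U ⊆ {P : {P : PrimeSpectrum R // P.asIdeal ∈ minimalPrimes R} | x ∈ P.1.asIdeal} ∧
        V ⊆ {P : {P : PrimeSpectrum R // P.asIdeal ∈ minimalPrimes R} | y ∈ P.1.asIdeal} ∧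
        {P : {P : PrimeSpectrum R // P.asIdeal ∈ minimalPrimes R} | x ∈ P.1.asIdeal} ∩
          {P : {P : PrimeSpectrum R // P.asIdeal ∈ minimalPrimes R} | y ∈ P.1.asIdeal} = ∅ := by
  intro U V hU hV hUV
  obtain ⟨WU, hWU, rfl⟩ := isOpen_induced_iff.mp hU
  obtain ⟨WV, hWV, rfl⟩ := isOpen_induced_iff.mp hV
  obtain ⟨sU, hsU⟩ := (PrimeSpectrum.isOpen_iff WU).mp hWU
  obtain ⟨sV, hsV⟩ := (PrimeSpectrum.isOpen_iff WV).mp hWV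
  set I : Ideal R := Ideal.span sU
  set J : Ideal R := Ideal.span sV
  -- membership characterization
  have hmemU : ∀ P : PrimeSpectrum R, P ∈ WU ↔ ¬ I ≤ P.asIdeal := by
    intro P
    rw [← Set.not_notMem (a := P) (s := WU), ← Set.mem_compl_iff, hsU,
      ← PrimeSpectrum.zeroLocus_span, PrimeSpectrum.mem_zeroLocus]
    simp [I, Ideal.span_le, SetLike.coe_subset_coe]
  have hmemV : ∀ P : PrimeSpectrum R, P ∈ WV ↔ ¬ J ≤ P.asIdeal := by
    intro P
    rw [← Set.not_notMem (a := P) (s := WV), ← Set.mem_compl_iff, hsV,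
      ← PrimeSpectrum.zeroLocus_span, PrimeSpectrum.mem_zeroLocus]
    simp [J, Ideal.span_le, SetLike.coe_subset_coe]
  -- I ⊓ J = ⊥
  have hIJ : I ⊓ J = ⊥ := by
    refine le_bot_iff.mp ?_
    intro a ha
    have hall : ∀ P ∈ minimalPrimes R, a ∈ P := by
      intro P hP
      haveI : P.IsPrime := hP.1.1
      by_cases hI : I ≤ P
      · exact hI ha.1
      by_cases hJ : J ≤ P
      · exact hJ ha.2
      · exfalso
        have : (⟨⟨P, ‹_›⟩, hP⟩ : {P : PrimeSpectrum R // P.asIdeal ∈ minimalPrimes R}) ∈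
            (Subtype.val ⁻¹' WU) ∩ (Subtype.val ⁻¹' WV) :=
          ⟨(hmemU _).mpr hI, (hmemV _).mpr hJ⟩
        rw [hUV] at this
        exact this
    have : a ∈ sInf (Ideal.minimalPrimes (⊥ : Ideal R)) :=
      Ideal.mem_sInf.mpr fun {p} hp => hall p hp
    rw [Ideal.sInf_minimalPrimes] at this
    have hb : (⊥ : Ideal R).radical = ⊥ := by
      simpa [nilradical] using nilradical_eq_zero R
    rwa [hb] at this
  obtain ⟨x, y, hx, hy, hreg⟩ := hW I J hIJ
  refine ⟨x, y, ?_, ?_, ?_⟩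
  · intro P hP
    have : ¬ I ≤ P.1.asIdeal := (hmemU P.1).mp hP
    obtain ⟨b, hbI, hbP⟩ := SetLike.not_le_iff_exists.mp this
    have hmul : x * b ∈ P.1.asIdeal := by rw [hx b hbI]; exact (P.1.asIdeal).zero_mem
    haveI hpr : P.1.asIdeal.IsPrime := P.2.1.1
    exact ((Ideal.IsPrime.mul_mem_iff_mem_or_mem hpr).mp hmul).resolve_right hbP
  · intro P hP
    have : ¬ J ≤ P.1.asIdeal := (hmemV P.1).mp hP
    obtain ⟨b, hbJ, hbP⟩ := SetLike.not_le_iff_exists.mp this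
    have hmul : y * b ∈ P.1.asIdeal := by rw [hy b hbJ]; exact (P.1.asIdeal).zero_mem
    haveI hpr : P.1.asIdeal.IsPrime := P.2.1.1
    exact ((Ideal.IsPrime.mul_mem_iff_mem_or_mem hpr).mp hmul).resolve_right hbP
  · ext P
    simp only [Set.mem_inter_iff, Set.mem_setOf_eq, Set.mem_empty_iff_false, iff_false, not_and]
    intro hxP hyP
    have hxy : x + y ∈ P.1.asIdeal := Ideal.add_mem _ hxP hyP
    obtain ⟨s, hsP, hs0⟩ := stmt18_aux P.2 hxy
    have : s = 0 := hreg s (by rwa [mul_comm] at hs0)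
    exact hsP (this ▸ P.1.asIdeal.zero_mem)
end
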